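/- Let S be uniform on {1,…,M}, let (S, Yⁿ) be jointly distributed, and let L = M/r be a desired list size with 1 ≤ r ≤ M. Let {𝒟_m} be the decision regions of a list decoder with L_n(yⁿ) = {m : yⁿ ∈ 𝒟_m}. Then for any γ > 0, Pr( P(S|Yⁿ) ≤ e^{−nγ}/L ) ≤ Pr(S ∉ L_n(Yⁿ)) + (e^{−nγ}/L) · E[|L_n(Yⁿ)|]. -/
import Mathlib


open Finset Real
open scoped Classical

/-- Probability of an event for a finite probability space given by a weight
function `p`. -/
noncomputable def prob {Ω : Type} [Fintype Ω] (p : Ω → ℝ) (E : Set Ω) : ℝ :=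
  ∑ ω ∈ Finset.univ.filter (fun ω => ω ∈ E), p ω

/-- The information-spectrum step in the converse for general channels:
`Pr(P(S|Yⁿ) ≤ e^{-nγ}/L) ≤ Pr(S ∉ Lₙ(Yⁿ)) + (e^{-nγ}/L) E[|Lₙ(Yⁿ)|]`,
where `L = M/r` and `Lₙ(y) = {m : y ∈ 𝒟ₘ}`. -/
theorem stmt_5 {Ω 𝒴 : Type} [Fintype Ω] [Fintype 𝒴]
    (p : Ω → ℝ) (hp : ∀ ω, 0 ≤ p ω) (hsum : ∑ ω, p ω = 1)
    (M : ℕ) (hM : 1 ≤ M)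
    (S : Ω → Fin M) (Y : Ω → 𝒴)
    (hunif : ∀ s : Fin M, prob p {ω | S ω = s} = 1 / M)
    (D : Fin M → Finset 𝒴)
    (r n γ : ℝ) (hr1 : 1 ≤ r) (hrM : r ≤ (M : ℝ)) (hn : 0 < n) (hγ : 0 < γ) :
    prob p {ω | prob p {ω' | S ω' = S ω ∧ Y ω' = Y ω} / prob p {ω' | Y ω' = Y ω}
        ≤ Real.exp (-(n * γ)) / ((M : ℝ) / r)}
      ≤ prob p {ω | Y ω ∉ D (S ω)}
        + (Real.exp (-(n * γ)) / ((M : ℝ) / r)) *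
            ∑ ω, p ω * ((Finset.univ.filter (fun m : Fin M => Y ω ∈ D m)).card : ℝ) := by
  classical
  set c : ℝ := Real.exp (-(n * γ)) / ((M : ℝ) / r) with hc_def
  have hMr : 0 < (M : ℝ) / r := by
    apply div_pos
    · exact_mod_cast Nat.lt_of_lt_of_le Nat.zero_lt_one hM
    · linarith
  have hc : 0 < c := div_pos (Real.exp_pos _) hMr
  -- abbreviations
  set q : Fin M × 𝒴 → ℝ :=
    fun sy => ∑ ω ∈ Finset.univ.filter (fun ω => S ω = sy.1 ∧ Y ω = sy.2), p ω with hq_def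
  set qY : 𝒴 → ℝ := fun y => ∑ ω ∈ Finset.univ.filter (fun ω => Y ω = y), p ω with hqY_def
  have hqY_nonneg : ∀ y, 0 ≤ qY y := fun y => Finset.sum_nonneg (fun ω _ => hp ω)
  have hq_nonneg : ∀ sy, 0 ≤ q sy := fun sy => Finset.sum_nonneg (fun ω _ => hp ω)
  have hq_le : ∀ sy, q sy ≤ qY sy.2 := by
    intro sy
    apply Finset.sum_le_sum_of_subset_of_nonneg
    · intro ω hω
      simp only [Finset.mem_filter] at *
      exact ⟨hω.1, hω.2.2⟩
    · exact fun ω _ _ => hp ω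
  have hprob_q : ∀ ω : Ω, prob p {ω' | S ω' = S ω ∧ Y ω' = Y ω} = q (S ω, Y ω) := by
    intro ω
    apply Finset.sum_congr _ fun _ _ => rfl
    ext ω'
    simp [Set.mem_setOf_eq]
  have hprob_qY : ∀ ω : Ω, prob p {ω' | Y ω' = Y ω} = qY (Y ω) := by
    intro ω
    apply Finset.sum_congr _ fun _ _ => rfl
    ext ω'
    simp [Set.mem_setOf_eq]
  -- the key bound: q sy ≤ c * qY sy.2 whenever q sy / qY sy.2 ≤ c
  have key : ∀ sy : Fin M × 𝒴, q sy / qY sy.2 ≤ c → q sy ≤ c * qY sy.2 := by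
    intro sy h
    rcases lt_or_eq_of_le (hqY_nonneg sy.2) with hpos | hzero
    · exact (div_le_iff₀ hpos).mp h
    · have h1 : q sy ≤ 0 := hzero ▸ hq_le sy
      have : q sy = 0 := le_antisymm h1 (hq_nonneg sy)
      rw [this, ← hzero]
      simp
  -- the event as a predicate
  set P : Ω → Prop := fun ω => q (S ω, Y ω) / qY (Y ω) ≤ c with hP_def
  have hLHS : prob p {ω | prob p {ω' | S ω' = S ω ∧ Y ω' = Y ω} / prob p {ω' | Y ω' = Y ω}
        ≤ Real.exp (-(n * γ)) / ((M : ℝ) / r)} = ∑ ω ∈ Finset.univ.filter P, p ω := by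
    apply Finset.sum_congr _ (fun _ _ => rfl)
    apply Finset.filter_congr
    intro ω _
    simp only [Set.mem_setOf_eq, hprob_q, hprob_qY, hP_def, hc_def]
  rw [hLHS]
  -- split on whether Y ω ∈ D (S ω)
  set Q : Ω → Prop := fun ω => Y ω ∈ D (S ω) with hQ_def
  rw [← Finset.sum_filter_add_sum_filter_not (Finset.univ.filter P) Q]
  have hbad : ∑ ω ∈ (Finset.univ.filter P).filter (fun ω => ¬ Q ω), p ω
      ≤ prob p {ω | Y ω ∉ D (S ω)} := by
    apply Finset.sum_le_sum_of_subset_of_nonneg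
    · intro ω hω
      simp only [Finset.mem_filter, Set.mem_setOf_eq] at *
      exact ⟨hω.1.1, hω.2⟩
    · exact fun ω _ _ => hp ω
  have hgood : ∑ ω ∈ (Finset.univ.filter P).filter Q, p ω
      ≤ c * ∑ ω, p ω * ((Finset.univ.filter (fun m : Fin M => Y ω ∈ D m)).card : ℝ) := by
    set T := (Finset.univ.filter P).filter Q with hT_def
    have hfib : ∑ ω ∈ T, p ω
        = ∑ sy : Fin M × 𝒴, ∑ ω ∈ T.filter (fun ω => (S ω, Y ω) = sy), p ω := by
      rw [Finset.sum_fiberwise_of_maps_to (fun ω _ => Finset.mem_univ _)]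
    rw [hfib]
    have hstep : ∀ sy : Fin M × 𝒴,
        ∑ ω ∈ T.filter (fun ω => (S ω, Y ω) = sy), p ω
        ≤ if sy.2 ∈ D sy.1 then c * qY sy.2 else 0 := by
      intro sy
      by_cases hD : sy.2 ∈ D sy.1
      · rw [if_pos hD]
        by_cases hPc : q sy / qY sy.2 ≤ c
        · calc ∑ ω ∈ T.filter (fun ω => (S ω, Y ω) = sy), p ω
              ≤ q sy := by
                apply Finset.sum_le_sum_of_subset_of_nonneg
                · intro ω hω
                  simp only [hT_def, Finset.mem_filter, Prod.ext_iff] at hω ⊢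
                  exact ⟨Finset.mem_univ _, hω.2.1, hω.2.2⟩
                · exact fun ω _ _ => hp ω
            _ ≤ c * qY sy.2 := key sy hPc
        · have : T.filter (fun ω => (S ω, Y ω) = sy) = ∅ := by
            apply Finset.filter_false_of_mem
            intro ω hω heq
            simp only [hT_def, Finset.mem_filter, hP_def] at hω
            exact hPc (heq ▸ hω.1.2)
          rw [this]
          simp only [Finset.sum_empty]
          exact mul_nonneg hc.le (hqY_nonneg _)
      · rw [if_neg hD]
        have : T.filter (fun ω => (S ω, Y ω) = sy) = ∅ := by
          apply Finset.filter_false_of_mem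
          intro ω hω heq
          simp only [hT_def, Finset.mem_filter, hQ_def] at hω
          rw [Prod.ext_iff] at heq
          exact hD (heq.1 ▸ heq.2 ▸ hω.2)
        rw [this, Finset.sum_empty]
    calc ∑ sy : Fin M × 𝒴, ∑ ω ∈ T.filter (fun ω => (S ω, Y ω) = sy), p ω
        ≤ ∑ sy : Fin M × 𝒴, (if sy.2 ∈ D sy.1 then c * qY sy.2 else 0) :=
          Finset.sum_le_sum (fun sy _ => hstep sy)
      _ = c * ∑ ω, p ω * ((Finset.univ.filter (fun m : Fin M => Y ω ∈ D m)).card : ℝ) := by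
          rw [Fintype.sum_prod_type]
          have h1 : ∀ s : Fin M, ∑ y : 𝒴, (if y ∈ D s then c * qY y else 0)
              = ∑ y : 𝒴, (if y ∈ D s then c * qY y else 0) := fun _ => rfl
          -- swap to sum over y first
          rw [Finset.sum_comm]
          have h2 : ∀ y : 𝒴, ∑ s : Fin M, (if y ∈ D s then c * qY y else 0)
              = ((Finset.univ.filter (fun s : Fin M => y ∈ D s)).card : ℝ) * (c * qY y) := by
            intro y
            rw [← Finset.sum_filter, Finset.sum_const, nsmul_eq_mul]
          simp only [h2]
          have h3 : ∑ ω, p ω * ((Finset.univ.filter (fun m : Fin M => Y ω ∈ D m)).card : ℝ)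
              = ∑ y : 𝒴, ∑ ω ∈ Finset.univ.filter (fun ω => Y ω = y),
                  p ω * ((Finset.univ.filter (fun m : Fin M => Y ω ∈ D m)).card : ℝ) :=
            (Finset.sum_fiberwise_of_maps_to (fun ω _ => Finset.mem_univ _) _).symm
          rw [h3, Finset.mul_sum]
          apply Finset.sum_congr rfl
          intro y _
          have : ∑ ω ∈ Finset.univ.filter (fun ω => Y ω = y),
              p ω * ((Finset.univ.filter (fun m : Fin M => Y ω ∈ D m)).card : ℝ)
              = ∑ ω ∈ Finset.univ.filter (fun ω => Y ω = y),
              p ω * ((Finset.univ.filter (fun m : Fin M => y ∈ D m)).card : ℝ) := by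
            apply Finset.sum_congr rfl
            intro ω hω
            simp only [Finset.mem_filter] at hω
            rw [hω.2]
          rw [this, ← Finset.sum_mul, hqY_def]
          ring
  linarith
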